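/- Under Assumption A and for every γ ∈ (0, min{γ_g, 1/(L_f + L_h)}), the function φ = f + g + h is level-bounded (i.e., for every α ∈ ℝ the sublevel set {x ∈ ℝ^d : φ(x) ≤ α} is bounded) if and only if the Davis–Yin envelope φ_γ^DY is level-bounded. -/

import Mathlib

open scoped RealInnerProductSpace

lemma fderiv_apply_eq_inner_gradient {E : Type*} [NormedAddCommGroup E] [InnerProductSpace ℝ E]
    [CompleteSpace E] (f : E → ℝ) (z v : E) :
    fderiv ℝ f z v = ⟪gradient f z, v⟫ := by
  rw [gradient, ← InnerProductSpace.toDual_apply_apply, LinearIsometryEquiv.apply_symm_apply]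

lemma descent_lemma {E : Type*} [NormedAddCommGroup E] [InnerProductSpace ℝ E]
    [CompleteSpace E] {f : E → ℝ} {L : ℝ} (hL : 0 ≤ L) (hfd : Differentiable ℝ f)
    (hlip : ∀ x y : E, ‖gradient f x - gradient f y‖ ≤ L * ‖x - y‖) (x y : E) :
    f y ≤ f x + ⟪gradient f x, y - x⟫ + L / 2 * ‖y - x‖ ^ 2 := by
  set v := y - x with hv
  have hgc : Continuous fun z : E => gradient f z := by
    have hl : LipschitzWith (Real.toNNReal L) fun z : E => gradient f z := by
      apply LipschitzWith.of_dist_le_mul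
      intro a b
      rw [dist_eq_norm, dist_eq_norm, Real.coe_toNNReal L hL]
      exact hlip a b
    exact hl.continuous
  have hD : Continuous fun t : ℝ => ⟪gradient f (x + t • v), v⟫ :=
    (hgc.comp (by continuity)).inner continuous_const
  have hderiv : ∀ t ∈ Set.uIcc (0:ℝ) 1,
      HasDerivAt (fun t : ℝ => f (x + t • v)) ⟪gradient f (x + t • v), v⟫ t := by
    intro t _
    have hc : HasDerivAt (fun t : ℝ => x + t • v) v t := by
      simpa using ((hasDerivAt_id t).smul_const v).const_add x
    have := (hfd (x + t • v)).hasFDerivAt.comp_hasDerivAt t hc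
    rw [← fderiv_apply_eq_inner_gradient]
    exact this
  have hint : ∫ t in (0:ℝ)..1, ⟪gradient f (x + t • v), v⟫ = f (x + v) - f x := by
    have := intervalIntegral.integral_eq_sub_of_hasDerivAt hderiv (hD.intervalIntegrable 0 1)
    simpa using this
  have hmono : ∫ t in (0:ℝ)..1, ⟪gradient f (x + t • v), v⟫
      ≤ ∫ t in (0:ℝ)..1, (⟪gradient f x, v⟫ + (L * ‖v‖ ^ 2) * t) := by
    apply intervalIntegral.integral_mono_on zero_le_one (hD.intervalIntegrable 0 1)
      ((by fun_prop :
        Continuous fun t : ℝ => ⟪gradient f x, v⟫ + (L * ‖v‖ ^ 2) * t).intervalIntegrable 0 1)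
    intro t ht
    have h1 : ⟪gradient f (x + t • v), v⟫ - ⟪gradient f x, v⟫
        = ⟪gradient f (x + t • v) - gradient f x, v⟫ := (inner_sub_left _ _ _).symm
    have h2 : ⟪gradient f (x + t • v) - gradient f x, v⟫ ≤ (L * ‖v‖ ^ 2) * t := by
      calc ⟪gradient f (x + t • v) - gradient f x, v⟫
          ≤ ‖gradient f (x + t • v) - gradient f x‖ * ‖v‖ := real_inner_le_norm _ _
        _ ≤ (L * ‖x + t • v - x‖) * ‖v‖ :=
            mul_le_mul_of_nonneg_right (hlip _ _) (norm_nonneg _)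
        _ = (L * ‖v‖ ^ 2) * t := by
            rw [add_sub_cancel_left, norm_smul, Real.norm_eq_abs, abs_of_nonneg ht.1]
            ring
    linarith
  have hcomp : ∫ t in (0:ℝ)..1, (⟪gradient f x, v⟫ + (L * ‖v‖ ^ 2) * t)
      = ⟪gradient f x, v⟫ + L / 2 * ‖v‖ ^ 2 := by
    rw [intervalIntegral.integral_add intervalIntegrable_const
      ((by fun_prop : Continuous fun t : ℝ => (L * ‖v‖ ^ 2) * t).intervalIntegrable 0 1),
      intervalIntegral.integral_const_mul, integral_id]
    simp
    ring
  have hxy : x + v = y := by rw [hv]; abel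
  rw [hxy] at hint
  linarith [hmono, hcomp ▸ hmono, hint ▸ hmono]


/-- The Davis–Yin envelope `φ_γ^DY`. -/
noncomputable def dyEnv {E : Type*} [NormedAddCommGroup E] [InnerProductSpace ℝ E]
    [CompleteSpace E] (f h : E → ℝ) (g : E → EReal) (γ : ℝ) (x : E) : EReal :=
  ⨅ y : E, (((f x + ⟪gradient f x, y - x⟫ + h x + ⟪gradient h x, y - x⟫
      + 1 / (2 * γ) * ‖y - x‖ ^ 2 : ℝ) : EReal) + g y)

theorem dyEnv_levelBounded_iff
    {E : Type*} [NormedAddCommGroup E] [InnerProductSpace ℝ E] [FiniteDimensional ℝ E]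
    (f h : E → ℝ) (g : E → EReal) (Lf Lh γg : ℝ)
    (hLf : 0 ≤ Lf) (hLh : 0 ≤ Lh)
    (hfd : Differentiable ℝ f)
    (hflip : ∀ x y : E, ‖gradient f x - gradient f y‖ ≤ Lf * ‖x - y‖)
    (hhd : Differentiable ℝ h)
    (hhlip : ∀ x y : E, ‖gradient h x - gradient h y‖ ≤ Lh * ‖x - y‖)
    (hγg : 0 < γg)
    (hgtop : ∃ x, g x ≠ ⊤) (hgbot : ∀ x, g x ≠ ⊥)
    (hglsc : LowerSemicontinuous g)
    (hpb : ∀ γ : ℝ, 0 < γ → γ < γg → ∀ w : E,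
      ⊥ < ⨅ y : E, (g y + ((1 / (2 * γ) * ‖y - w‖ ^ 2 : ℝ) : EReal)))
    (hattain : ∃ xs : E, ∀ x : E,
      (f xs : EReal) + g xs + (h xs : EReal) ≤ (f x : EReal) + g x + (h x : EReal))
    (γ : ℝ) (hγ0 : 0 < γ) (hγ1 : γ < γg) (hγ2 : γ * (Lf + Lh) < 1) :
    (∀ α : ℝ, Bornology.IsBounded
        {x : E | (f x : EReal) + g x + (h x : EReal) ≤ (α : EReal)}) ↔
      (∀ α : ℝ, Bornology.IsBounded {x : E | dyEnv f h g γ x ≤ (α : EReal)}) := by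
  obtain ⟨xs, hxs⟩ := hattain
  obtain ⟨x₀, hx₀⟩ := hgtop
  -- the minimum value is finite
  have hφx₀ : (f x₀ : EReal) + g x₀ + (h x₀ : EReal) < ⊤ :=
    EReal.add_lt_top (LT.lt.ne_top (EReal.add_lt_top (EReal.coe_ne_top _) hx₀)) (EReal.coe_ne_top _)
  have hgstop : g xs ≠ ⊤ := by
    intro htop
    have : (f xs : EReal) + g xs + (h xs : EReal) = ⊤ := by
      rw [htop, EReal.coe_add_top, EReal.top_add_coe]
    exact absurd ((this ▸ hxs x₀).trans_lt hφx₀) (lt_irrefl _)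
  obtain ⟨gs, hgs⟩ : ∃ gs : ℝ, g xs = (gs : EReal) :=
    ⟨(g xs).toReal, (EReal.coe_toReal hgstop (hgbot xs)).symm⟩
  set m : ℝ := f xs + gs + h xs with hm
  have hmle : ∀ x : E, (m : EReal) ≤ (f x : EReal) + g x + (h x : EReal) := by
    intro x
    have := hxs x
    rwa [hgs, ← EReal.coe_add, ← EReal.coe_add, ← hm] at this
  -- envelope ≤ φ pointwise
  have hle : ∀ x : E, dyEnv f h g γ x ≤ (f x : EReal) + g x + (h x : EReal) := by
    intro x
    have h1 : dyEnv f h g γ x ≤ ((f x + ⟪gradient f x, x - x⟫ + h x + ⟪gradient h x, x - x⟫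
        + 1 / (2 * γ) * ‖x - x‖ ^ 2 : ℝ) : EReal) + g x := iInf_le _ x
    have h2 : (f x + ⟪gradient f x, x - x⟫ + h x + ⟪gradient h x, x - x⟫
        + 1 / (2 * γ) * ‖x - x‖ ^ 2 : ℝ) = f x + h x := by
      simp
    rw [h2] at h1
    calc dyEnv f h g γ x ≤ ((f x + h x : ℝ) : EReal) + g x := h1
      _ = (f x : EReal) + g x + (h x : EReal) := by
          rw [EReal.coe_add]; exact add_right_comm _ _ _
  constructor
  · -- hard direction: φ level-bounded → envelope level-bounded
    intro H α
    set c : ℝ := 1 / (2 * γ) - (Lf + Lh) / 2 with hc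
    have hcpos : 0 < c := by
      rw [hc]
      have : (Lf + Lh) / 2 < 1 / (2 * γ) := by
        rw [div_lt_div_iff₀ (by norm_num) (by positivity)]
        nlinarith
      linarith
    obtain ⟨R, hR⟩ := (H (α + 1)).subset_closedBall 0
    apply Bornology.IsBounded.subset (Metric.isBounded_closedBall
      (x := (0 : E)) (r := R + Real.sqrt ((α + 1 - m) / c)))
    intro x hx
    simp only [Set.mem_setOf_eq] at hx
    have hlt : dyEnv f h g γ x < ((α + 1 : ℝ) : EReal) :=
      hx.trans_lt (by exact_mod_cast EReal.coe_lt_coe_iff.2 (by linarith : α < α + 1))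
    rw [dyEnv, iInf_lt_iff] at hlt
    obtain ⟨y, hy⟩ := hlt
    set A : ℝ := f x + ⟪gradient f x, y - x⟫ + h x + ⟪gradient h x, y - x⟫
      + 1 / (2 * γ) * ‖y - x‖ ^ 2 with hA
    have hgytop : g y ≠ ⊤ := by
      intro htop
      rw [htop, EReal.coe_add_top] at hy
      exact absurd hy (by simp)
    obtain ⟨gy, hgy⟩ : ∃ gy : ℝ, g y = (gy : EReal) :=
      ⟨(g y).toReal, (EReal.coe_toReal hgytop (hgbot y)).symm⟩
    rw [hgy, ← EReal.coe_add, EReal.coe_lt_coe_iff] at hy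
    -- descent lemma bounds
    have hdf := descent_lemma hLf hfd hflip x y
    have hdh := descent_lemma hLh hhd hhlip x y
    have hAc : f y + h y + c * ‖y - x‖ ^ 2 ≤ A := by
      rw [hA, hc]; nlinarith [sq_nonneg ‖y - x‖]
    -- φ y ≥ m
    have hmy : m ≤ f y + gy + h y := by
      have := hmle y
      rwa [hgy, ← EReal.coe_add, ← EReal.coe_add, EReal.coe_le_coe_iff] at this
    have hsq : c * ‖y - x‖ ^ 2 ≤ α + 1 - m := by nlinarith
    have hvnorm : ‖y - x‖ ≤ Real.sqrt ((α + 1 - m) / c) := by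
      rw [← Real.sqrt_sq (norm_nonneg (y - x))]
      apply Real.sqrt_le_sqrt
      rw [le_div_iff₀ hcpos]
      linarith
    -- y is in the sublevel set of φ at α+1
    have hyφ : (f y : EReal) + g y + (h y : EReal) ≤ ((α + 1 : ℝ) : EReal) := by
      rw [hgy, ← EReal.coe_add, ← EReal.coe_add, EReal.coe_le_coe_iff]
      nlinarith [mul_nonneg hcpos.le (sq_nonneg ‖y - x‖)]
    have hyR : ‖y‖ ≤ R := by
      have := hR hyφ
      simpa [Metric.mem_closedBall, dist_zero_right] using this
    have : ‖x‖ ≤ ‖y‖ + ‖y - x‖ := by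
      calc ‖x‖ = ‖y - (y - x)‖ := by rw [sub_sub_cancel]
        _ ≤ ‖y‖ + ‖y - x‖ := norm_sub_le _ _
    simp only [Metric.mem_closedBall, dist_zero_right]
    linarith
  · -- easy direction
    intro H α
    apply (H α).subset
    intro x hx
    exact le_trans (hle x) hx
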